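/- Let I_k(t) = (1/π)∫₀^π e^{t cos ω} cos(kω) dω for k ∈ ℤ and t > 0. Then there exists a constant C > 0 such that Σ_{k∈ℤ} |I_{k+1}(t) − 2I_k(t) + I_{k−1}(t)| ≤ C e^t / t for all t > 0. -/

import Mathlib

open Filter Topology Set intervalIntegral

noncomputable section

/-- The modified Bessel function of the first kind of integer order `k`. -/
def besselI (k : ℤ) (t : ℝ) : ℝ :=
  (1 / Real.pi) * ∫ ω in (0 : ℝ)..Real.pi, Real.exp (t * Real.cos ω) * Real.cos ((k : ℝ) * ω)

namespace BesselAux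

open Real MeasureTheory

def g (t ω : ℝ) : ℝ := Real.exp (t * Real.cos ω) * (1 - Real.cos ω)
def g1 (t ω : ℝ) : ℝ := Real.exp (t * Real.cos ω) *
  (Real.sin ω * (1 - t * (1 - Real.cos ω)))
def g2 (t ω : ℝ) : ℝ := Real.exp (t * Real.cos ω) *
  ((Real.cos ω - t * Real.sin ω ^ 2) * (1 - t * (1 - Real.cos ω)) - t * Real.sin ω ^ 2)

lemma continuous_g (t : ℝ) : Continuous (g t) := by unfold g; continuity
lemma continuous_g1 (t : ℝ) : Continuous (g1 t) := by unfold g1; continuity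
lemma continuous_g2 (t : ℝ) : Continuous (g2 t) := by unfold g2; continuity

lemma hasDerivAt_g (t ω : ℝ) : HasDerivAt (g t) (g1 t ω) ω := by
  have hc : HasDerivAt (fun ω : ℝ => t * Real.cos ω) (t * (-Real.sin ω)) ω :=
    (Real.hasDerivAt_cos ω).const_mul t
  have he : HasDerivAt (fun ω : ℝ => Real.exp (t * Real.cos ω))
      (Real.exp (t * Real.cos ω) * (t * (-Real.sin ω))) ω := hc.exp
  have h2 : HasDerivAt (fun ω : ℝ => 1 - Real.cos ω) (-(-Real.sin ω)) ω :=
    (Real.hasDerivAt_cos ω).const_sub 1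
  have := he.mul h2
  refine this.congr_deriv ?_
  unfold g1; ring

lemma hasDerivAt_g1 (t ω : ℝ) : HasDerivAt (g1 t) (g2 t ω) ω := by
  have hc : HasDerivAt (fun ω : ℝ => t * Real.cos ω) (t * (-Real.sin ω)) ω :=
    (Real.hasDerivAt_cos ω).const_mul t
  have he : HasDerivAt (fun ω : ℝ => Real.exp (t * Real.cos ω))
      (Real.exp (t * Real.cos ω) * (t * (-Real.sin ω))) ω := hc.exp
  have hw : HasDerivAt (fun ω : ℝ => 1 - t * (1 - Real.cos ω))
      (-(t * -(-Real.sin ω))) ω :=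
    (((Real.hasDerivAt_cos ω).const_sub 1).const_mul t).const_sub 1
  have hv : HasDerivAt (fun ω : ℝ => Real.sin ω * (1 - t * (1 - Real.cos ω)))
      (Real.cos ω * (1 - t * (1 - Real.cos ω)) + Real.sin ω * (-(t * -(-Real.sin ω)))) ω :=
    (Real.hasDerivAt_sin ω).mul hw
  have := he.mul hv
  refine this.congr_deriv ?_
  unfold g2; ring

lemma le_exp_half {x : ℝ} (hx : 0 ≤ x) : x ≤ Real.exp (x / 2) := by
  have h := Real.add_one_le_exp (x / 4)
  have h2 : Real.exp (x / 2) = Real.exp (x / 4) * Real.exp (x / 4) := by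
    rw [← Real.exp_add]; ring_nf
  nlinarith [sq_nonneg (1 - x / 4), Real.exp_pos (x / 4)]

lemma sq_le_exp_half {x : ℝ} (hx : 0 ≤ x) : x ^ 2 ≤ 16 * Real.exp (x / 2) := by
  have h := Real.add_one_le_exp (x / 4)
  have h2 : Real.exp (x / 2) = Real.exp (x / 4) * Real.exp (x / 4) := by
    rw [← Real.exp_add]; ring_nf
  nlinarith [Real.exp_pos (x / 4)]

lemma mul_exp_neg_le {x : ℝ} (hx : 0 ≤ x) : x * Real.exp (-x) ≤ Real.exp (-(x / 2)) := by
  have h := le_exp_half hx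
  have h3 : Real.exp (x / 2) * Real.exp (-x) = Real.exp (-(x / 2)) := by
    rw [← Real.exp_add]; ring_nf
  calc x * Real.exp (-x) ≤ Real.exp (x / 2) * Real.exp (-x) := by
        exact mul_le_mul_of_nonneg_right h (Real.exp_pos _).le
    _ = Real.exp (-(x / 2)) := h3

lemma poly_exp_le {x : ℝ} (hx : 0 ≤ x) :
    (1 + 5 * x + 2 * x ^ 2) * Real.exp (-x) ≤ 38 * Real.exp (-(x / 2)) := by
  have h1 : x * Real.exp (-(x / 2)) ≤ 1 := by
    have := le_exp_half hx
    calc x * Real.exp (-(x/2)) ≤ Real.exp (x/2) * Real.exp (-(x/2)) :=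
          mul_le_mul_of_nonneg_right this (Real.exp_pos _).le
      _ = 1 := by rw [← Real.exp_add]; simp
  have h2 : x ^ 2 * Real.exp (-(x / 2)) ≤ 16 := by
    have := sq_le_exp_half hx
    calc x ^ 2 * Real.exp (-(x/2)) ≤ 16 * Real.exp (x/2) * Real.exp (-(x/2)) :=
          mul_le_mul_of_nonneg_right this (Real.exp_pos _).le
      _ = 16 := by rw [mul_assoc, ← Real.exp_add]; simp
  have h3 : Real.exp (-x) = Real.exp (-(x/2)) * Real.exp (-(x/2)) := by
    rw [← Real.exp_add]; ring_nf
  have h4 : Real.exp (-(x/2)) ≤ 1 := Real.exp_le_one_iff.mpr (by linarith)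
  have h5 : (0:ℝ) < Real.exp (-(x/2)) := Real.exp_pos _
  nlinarith [h5.le, mul_le_mul_of_nonneg_right h1 h5.le, h2, h4, sq_nonneg x]

lemma half_u_ge {ω : ℝ} (hω : ω ∈ Icc (0:ℝ) π) (t : ℝ) (ht : 0 ≤ t) :
    Real.exp (-(t * (1 - Real.cos ω) / 2)) ≤ Real.exp (-(t / π ^ 2 * ω ^ 2)) := by
  have hpi := Real.pi_pos
  have habs : |ω| ≤ π := by
    rw [abs_le]; exact ⟨by linarith [hω.1], hω.2⟩
  have h := Real.cos_le_one_sub_mul_cos_sq habs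
  have hp2 : (0:ℝ) < π ^ 2 := by positivity
  have hd : 2 / π ^ 2 * ω ^ 2 * π ^ 2 = 2 * ω ^ 2 := by field_simp
  have h2 : 2 * ω ^ 2 ≤ (1 - Real.cos ω) * π ^ 2 := by
    nlinarith [mul_le_mul_of_nonneg_right h hp2.le]
  apply Real.exp_le_exp.mpr
  rw [neg_le_neg_iff, div_mul_eq_mul_div, div_le_div_iff₀ hp2 (by norm_num : (0:ℝ) < 2)]
  nlinarith [mul_le_mul_of_nonneg_left h2 ht]

lemma exp_tc_eq (t ω : ℝ) :
    Real.exp (t * Real.cos ω) = Real.exp t * Real.exp (-(t * (1 - Real.cos ω))) := by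
  rw [← Real.exp_add]; ring_nf

lemma g_le {t ω : ℝ} (ht : 0 < t) (hω : ω ∈ Icc (0:ℝ) π) :
    g t ω ≤ Real.exp t / t * Real.exp (-(t / π ^ 2 * ω ^ 2)) := by
  have hu : 0 ≤ 1 - Real.cos ω := by linarith [Real.cos_le_one ω]
  have key : t * (1 - Real.cos ω) * Real.exp (-(t * (1 - Real.cos ω)))
      ≤ Real.exp (-(t / π ^ 2 * ω ^ 2)) :=
    le_trans (mul_exp_neg_le (by positivity)) (half_u_ge hω t ht.le)
  have heq : g t ω = Real.exp t / t *
      (t * (1 - Real.cos ω) * Real.exp (-(t * (1 - Real.cos ω)))) := by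
    unfold g; rw [exp_tc_eq]; field_simp
  rw [heq]
  exact mul_le_mul_of_nonneg_left key (by positivity)

lemma g2_le {t ω : ℝ} (ht : 0 < t) (hω : ω ∈ Icc (0:ℝ) π) :
    |g2 t ω| ≤ 38 * Real.exp t * Real.exp (-(t / π ^ 2 * ω ^ 2)) := by
  have hu : 0 ≤ 1 - Real.cos ω := by linarith [Real.cos_le_one ω]
  have htu : 0 ≤ t * (1 - Real.cos ω) := by positivity
  have hs2 : Real.sin ω ^ 2 ≤ 2 * (1 - Real.cos ω) := by
    nlinarith [Real.sin_sq ω, Real.neg_one_le_cos ω, Real.cos_le_one ω]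
  have hinner : |(Real.cos ω - t * Real.sin ω ^ 2) * (1 - t * (1 - Real.cos ω))
        - t * Real.sin ω ^ 2|
      ≤ 1 + 5 * (t * (1 - Real.cos ω)) + 2 * (t * (1 - Real.cos ω)) ^ 2 := by
    have hb : 0 ≤ t * Real.sin ω ^ 2 := by positivity
    have hb2 : t * Real.sin ω ^ 2 ≤ 2 * (t * (1 - Real.cos ω)) := by nlinarith
    have h1 : |Real.cos ω - t * Real.sin ω ^ 2| ≤ 1 + 2 * (t * (1 - Real.cos ω)) := by
      rw [abs_le]
      constructor <;> nlinarith [Real.neg_one_le_cos ω, Real.cos_le_one ω]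
    have h2 : |1 - t * (1 - Real.cos ω)| ≤ 1 + t * (1 - Real.cos ω) := by
      rw [abs_le]; constructor <;> nlinarith
    calc |(Real.cos ω - t * Real.sin ω ^ 2) * (1 - t * (1 - Real.cos ω))
          - t * Real.sin ω ^ 2|
        ≤ |(Real.cos ω - t * Real.sin ω ^ 2) * (1 - t * (1 - Real.cos ω))|
          + |t * Real.sin ω ^ 2| := abs_sub _ _
      _ = |Real.cos ω - t * Real.sin ω ^ 2| * |1 - t * (1 - Real.cos ω)|
          + t * Real.sin ω ^ 2 := by rw [abs_mul, abs_of_nonneg hb]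
      _ ≤ (1 + 2 * (t * (1 - Real.cos ω))) * (1 + t * (1 - Real.cos ω))
          + 2 * (t * (1 - Real.cos ω)) := by
          refine add_le_add (mul_le_mul h1 h2 (abs_nonneg _) (by positivity)) hb2
      _ ≤ 1 + 5 * (t * (1 - Real.cos ω)) + 2 * (t * (1 - Real.cos ω)) ^ 2 := by nlinarith
  calc |g2 t ω| = Real.exp (t * Real.cos ω) * |(Real.cos ω - t * Real.sin ω ^ 2)
          * (1 - t * (1 - Real.cos ω)) - t * Real.sin ω ^ 2| := by
        unfold g2; rw [abs_mul, abs_of_pos (Real.exp_pos _)]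
    _ = Real.exp t * (|(Real.cos ω - t * Real.sin ω ^ 2)
          * (1 - t * (1 - Real.cos ω)) - t * Real.sin ω ^ 2|
          * Real.exp (-(t * (1 - Real.cos ω)))) := by rw [exp_tc_eq]; ring
    _ ≤ Real.exp t * ((1 + 5 * (t * (1 - Real.cos ω)) + 2 * (t * (1 - Real.cos ω)) ^ 2)
          * Real.exp (-(t * (1 - Real.cos ω)))) :=
        mul_le_mul_of_nonneg_left
          (mul_le_mul_of_nonneg_right hinner (Real.exp_pos _).le) (Real.exp_pos _).le
    _ ≤ Real.exp t * (38 * Real.exp (-(t * (1 - Real.cos ω) / 2))) :=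
        mul_le_mul_of_nonneg_left (poly_exp_le htu) (Real.exp_pos _).le
    _ ≤ Real.exp t * (38 * Real.exp (-(t / π ^ 2 * ω ^ 2))) :=
        mul_le_mul_of_nonneg_left
          (mul_le_mul_of_nonneg_left (half_u_ge hω t ht.le) (by norm_num)) (Real.exp_pos _).le
    _ = 38 * Real.exp t * Real.exp (-(t / π ^ 2 * ω ^ 2)) := by ring

lemma gauss_int_le {a : ℝ} (ha : 0 < a) :
    ∫ ω in (0:ℝ)..π, Real.exp (-(a * ω ^ 2)) ≤ Real.sqrt (π / a) / 2 := by
  have hpi := Real.pi_pos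
  rw [intervalIntegral.integral_of_le hpi.le]
  have hint : IntegrableOn (fun ω : ℝ => Real.exp (-(a * ω ^ 2))) (Ioi 0) := by
    have := integrable_exp_neg_mul_sq ha
    simpa [neg_mul] using this.integrableOn
  calc (∫ ω in Ioc (0:ℝ) π, Real.exp (-(a * ω ^ 2)))
      ≤ ∫ ω in Ioi (0:ℝ), Real.exp (-(a * ω ^ 2)) := by
        apply setIntegral_mono_set hint
        · filter_upwards with x using (Real.exp_pos _).le
        · exact HasSubset.Subset.eventuallyLE Ioc_subset_Ioi_self
    _ = Real.sqrt (π / a) / 2 := by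
        simpa [neg_mul] using integral_gaussian_Ioi a

lemma sqrt_pi_cubed_le : Real.sqrt (π ^ 3) ≤ 6 := by
  have h1 : π < 3.15 := Real.pi_lt_d2
  have hpi := Real.pi_pos
  have h2 : π ^ 2 < 10 := by nlinarith
  have h : π ^ 3 ≤ 36 := by nlinarith
  calc Real.sqrt (π ^ 3) ≤ Real.sqrt 36 := Real.sqrt_le_sqrt h
    _ = 6 := by
      rw [show (36:ℝ) = 6 ^ 2 by norm_num, Real.sqrt_sq (by norm_num)]

lemma gauss_main {t : ℝ} (ht : 0 < t) :
    ∫ ω in (0:ℝ)..π, Real.exp (-(t / π ^ 2 * ω ^ 2)) ≤ 3 / Real.sqrt t := by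
  have hpi := Real.pi_pos
  have hst : 0 < Real.sqrt t := Real.sqrt_pos.mpr ht
  have ha : 0 < t / π ^ 2 := by positivity
  calc (∫ ω in (0:ℝ)..π, Real.exp (-(t / π ^ 2 * ω ^ 2)))
      ≤ Real.sqrt (π / (t / π ^ 2)) / 2 := gauss_int_le ha
    _ = Real.sqrt (π ^ 3) / Real.sqrt t / 2 := by
        rw [show π / (t / π ^ 2) = π ^ 3 / t by field_simp,
          Real.sqrt_div (by positivity) t]
    _ ≤ 6 / Real.sqrt t / 2 := by
        gcongr
        exact sqrt_pi_cubed_le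
    _ = 3 / Real.sqrt t := by ring

lemma gauss_pi {t : ℝ} (ht : 0 < t) :
    ∫ ω in (0:ℝ)..π, Real.exp (-(t / π ^ 2 * ω ^ 2)) ≤ π := by
  have hpi := Real.pi_pos
  calc (∫ ω in (0:ℝ)..π, Real.exp (-(t / π ^ 2 * ω ^ 2)))
      ≤ ∫ ω in (0:ℝ)..π, (1:ℝ) := by
        apply intervalIntegral.integral_mono_on hpi.le ?_ (by simp) ?_
        · apply Continuous.intervalIntegrable; continuity
        · intro x hx
          apply Real.exp_le_one_iff.mpr
          simp only [neg_nonpos]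
          positivity
      _ = π := by simp

lemma ibp (t : ℝ) (k : ℤ) (hk : k ≠ 0) :
    ∫ ω in (0:ℝ)..π, g t ω * Real.cos (k * ω) =
      -(1 / (k:ℝ) ^ 2) * ∫ ω in (0:ℝ)..π, g2 t ω * Real.cos (k * ω) := by
  have hkr : (k:ℝ) ≠ 0 := Int.cast_ne_zero.mpr hk
  have hlin : ∀ ω : ℝ, HasDerivAt (fun ω : ℝ => (k:ℝ) * ω) (k:ℝ) ω := by
    intro ω; simpa using (hasDerivAt_id ω).const_mul (k:ℝ)
  have hsin : ∀ ω : ℝ, HasDerivAt (fun ω : ℝ => Real.sin (k * ω) / k)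
      (Real.cos (k * ω)) ω := by
    intro ω
    have h3 := ((Real.hasDerivAt_sin ((k:ℝ) * ω)).comp ω (hlin ω)).div_const (k:ℝ)
    simpa [mul_div_assoc, div_self hkr] using h3
  have hcos : ∀ ω : ℝ, HasDerivAt (fun ω : ℝ => -(Real.cos (k * ω) / k))
      (Real.sin (k * ω)) ω := by
    intro ω
    have h3 := (((Real.hasDerivAt_cos ((k:ℝ) * ω)).comp ω (hlin ω)).div_const (k:ℝ)).neg
    refine h3.congr_deriv ?_
    field_simp
  have hcont_cos : Continuous fun ω : ℝ => Real.cos (k * ω) := by continuity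
  have hcont_sin : Continuous fun ω : ℝ => Real.sin (k * ω) := by continuity
  have step1 : ∫ ω in (0:ℝ)..π, g t ω * Real.cos (k * ω) =
      -((∫ ω in (0:ℝ)..π, g1 t ω * Real.sin (k * ω)) / k) := by
    have h := intervalIntegral.integral_mul_deriv_eq_deriv_mul
      (a := (0:ℝ)) (b := π) (u := g t) (v := fun ω : ℝ => Real.sin (k * ω) / k)
      (u' := g1 t) (v' := fun ω : ℝ => Real.cos (k * ω))
      (fun x _ => hasDerivAt_g t x) (fun x _ => hsin x)
      ((continuous_g1 t).intervalIntegrable _ _)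
      (hcont_cos.intervalIntegrable _ _)
    have hdiv : ∫ x in (0:ℝ)..π, g1 t x * (Real.sin (k * x) / k) =
        (∫ x in (0:ℝ)..π, g1 t x * Real.sin (k * x)) / k := by
      rw [← intervalIntegral.integral_div]
      congr 1; ext x; ring
    rw [h, hdiv]
    have hzero : Real.sin ((k:ℝ) * π) = 0 := Real.sin_int_mul_pi k
    simp [hzero]
  have step2 : ∫ ω in (0:ℝ)..π, g1 t ω * Real.sin (k * ω) =
      (∫ ω in (0:ℝ)..π, g2 t ω * Real.cos (k * ω)) / k := by
    have h := intervalIntegral.integral_mul_deriv_eq_deriv_mul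
      (a := (0:ℝ)) (b := π) (u := g1 t) (v := fun ω : ℝ => -(Real.cos (k * ω) / k))
      (u' := g2 t) (v' := fun ω : ℝ => Real.sin (k * ω))
      (fun x _ => hasDerivAt_g1 t x) (fun x _ => hcos x)
      ((continuous_g2 t).intervalIntegrable _ _)
      (hcont_sin.intervalIntegrable _ _)
    have hdiv : ∫ x in (0:ℝ)..π, g2 t x * -(Real.cos (k * x) / k) =
        -((∫ x in (0:ℝ)..π, g2 t x * Real.cos (k * x)) / k) := by
      rw [← intervalIntegral.integral_div, ← intervalIntegral.integral_neg]
      congr 1; ext x; ring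
    have hg1pi : g1 t π = 0 := by unfold g1; simp
    have hg1zero : g1 t 0 = 0 := by unfold g1; simp
    rw [h, hdiv, hg1pi, hg1zero]
    ring
  rw [step1, step2, div_div, show ((k:ℝ) * k) = (k:ℝ) ^ 2 by ring]
  ring

lemma diff_eq (t : ℝ) (k : ℤ) :
    besselI (k + 1) t - 2 * besselI k t + besselI (k - 1) t =
      -(2 / π) * ∫ ω in (0:ℝ)..π, g t ω * Real.cos ((k:ℝ) * ω) := by
  have hint : ∀ m : ℤ, IntervalIntegrable
      (fun ω => Real.exp (t * Real.cos ω) * Real.cos ((m:ℝ) * ω)) volume 0 π := by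
    intro m; apply Continuous.intervalIntegrable; continuity
  have hptw : ∀ ω : ℝ,
      Real.exp (t * Real.cos ω) * Real.cos (((k + 1 : ℤ) : ℝ) * ω) -
        2 * (Real.exp (t * Real.cos ω) * Real.cos ((k:ℝ) * ω)) +
        Real.exp (t * Real.cos ω) * Real.cos (((k - 1 : ℤ) : ℝ) * ω) =
      -2 * (g t ω * Real.cos ((k:ℝ) * ω)) := by
    intro ω
    push_cast
    rw [show ((k:ℝ) + 1) * ω = (k:ℝ) * ω + ω by ring, Real.cos_add,
      show ((k:ℝ) - 1) * ω = (k:ℝ) * ω - ω by ring, Real.cos_sub]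
    unfold g; ring
  have hcomb : (∫ ω in (0:ℝ)..π, Real.exp (t * Real.cos ω) * Real.cos (((k+1:ℤ):ℝ) * ω))
      - 2 * (∫ ω in (0:ℝ)..π, Real.exp (t * Real.cos ω) * Real.cos ((k:ℝ) * ω))
      + (∫ ω in (0:ℝ)..π, Real.exp (t * Real.cos ω) * Real.cos (((k-1:ℤ):ℝ) * ω))
      = ∫ ω in (0:ℝ)..π, -2 * (g t ω * Real.cos ((k:ℝ) * ω)) := by
    rw [← intervalIntegral.integral_const_mul, ← intervalIntegral.integral_sub (hint (k+1))
      (((hint k).const_mul 2)), ← intervalIntegral.integral_add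
      (((hint (k+1)).sub ((hint k).const_mul 2))) (hint (k-1))]
    congr 1
    ext ω
    exact hptw ω
  unfold besselI
  have hpi := Real.pi_pos
  rw [show (1 / π) * (∫ ω in (0:ℝ)..π, Real.exp (t * Real.cos ω) * Real.cos (((k+1:ℤ):ℝ) * ω))
      - 2 * ((1 / π) * ∫ ω in (0:ℝ)..π, Real.exp (t * Real.cos ω) * Real.cos ((k:ℝ) * ω))
      + (1 / π) * (∫ ω in (0:ℝ)..π, Real.exp (t * Real.cos ω) * Real.cos (((k-1:ℤ):ℝ) * ω))
      = (1 / π) * ((∫ ω in (0:ℝ)..π, Real.exp (t * Real.cos ω) * Real.cos (((k+1:ℤ):ℝ) * ω))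
      - 2 * (∫ ω in (0:ℝ)..π, Real.exp (t * Real.cos ω) * Real.cos ((k:ℝ) * ω))
      + (∫ ω in (0:ℝ)..π, Real.exp (t * Real.cos ω) * Real.cos (((k-1:ℤ):ℝ) * ω))) by ring,
    hcomb, intervalIntegral.integral_const_mul]
  ring

lemma nat_tsum_bound {f : ℕ → ℝ} {c1 c2 : ℝ} (hc2 : 0 ≤ c2)
    (h0 : ∀ n, 0 ≤ f n) (h1 : ∀ n, f n ≤ c1)
    (h2 : ∀ n : ℕ, n ≠ 0 → f n ≤ c2 / (n:ℝ) ^ 2) {K : ℕ} (hK : K ≠ 0) :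
    Summable f ∧ ∑' n, f n ≤ ((K:ℝ) + 1) * c1 + c2 / K := by
  have hc1 : 0 ≤ c1 := le_trans (h0 0) (h1 0)
  have key : ∀ N, ∑ n ∈ Finset.range N, f n ≤ ((K:ℝ) + 1) * c1 + c2 / K := by
    intro N
    rw [← Finset.sum_filter_add_sum_filter_not (Finset.range N) (fun n => n ≤ K)]
    have hA : ∑ n ∈ (Finset.range N).filter (fun n => n ≤ K), f n ≤ ((K:ℝ) + 1) * c1 := by
      have hsub : (Finset.range N).filter (fun n => n ≤ K) ⊆ Finset.range (K + 1) := by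
        intro x hx
        simp only [Finset.mem_filter, Finset.mem_range] at hx ⊢
        omega
      have hcard : ((Finset.range N).filter (fun n => n ≤ K)).card ≤ K + 1 := by
        simpa using Finset.card_le_card hsub
      calc ∑ n ∈ (Finset.range N).filter (fun n => n ≤ K), f n
          ≤ ((Finset.range N).filter (fun n => n ≤ K)).card • c1 :=
            Finset.sum_le_card_nsmul _ _ _ (fun x _ => h1 x)
        _ = (((Finset.range N).filter (fun n => n ≤ K)).card : ℝ) * c1 := by
            rw [nsmul_eq_mul]
        _ ≤ ((K:ℝ) + 1) * c1 := by
            apply mul_le_mul_of_nonneg_right _ hc1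
            exact_mod_cast hcard
    have hB : ∑ n ∈ (Finset.range N).filter (fun n => ¬ n ≤ K), f n ≤ c2 / K := by
      set M := max K N with hM
      have hKM : K ≤ M := le_max_left _ _
      have hsub : (Finset.range N).filter (fun n => ¬ n ≤ K) ⊆ Finset.Ioc K M := by
        intro x hx
        simp only [Finset.mem_filter, Finset.mem_range, Finset.mem_Ioc] at hx ⊢
        omega
      calc ∑ n ∈ (Finset.range N).filter (fun n => ¬ n ≤ K), f n
          ≤ ∑ n ∈ (Finset.range N).filter (fun n => ¬ n ≤ K), c2 * ((n:ℝ) ^ 2)⁻¹ := by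
            apply Finset.sum_le_sum
            intro n hn
            simp only [Finset.mem_filter] at hn
            have hn0 : n ≠ 0 := by omega
            simpa [div_eq_mul_inv] using h2 n hn0
        _ ≤ ∑ n ∈ Finset.Ioc K M, c2 * ((n:ℝ) ^ 2)⁻¹ := by
            apply Finset.sum_le_sum_of_subset_of_nonneg hsub
            intro n _ _
            positivity
        _ = c2 * ∑ n ∈ Finset.Ioc K M, ((n:ℝ) ^ 2)⁻¹ := by
            rw [Finset.mul_sum]
        _ ≤ c2 * ((K:ℝ)⁻¹ - (M:ℝ)⁻¹) :=
            mul_le_mul_of_nonneg_left (sum_Ioc_inv_sq_le_sub hK hKM) hc2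
        _ ≤ c2 * (K:ℝ)⁻¹ := by
            apply mul_le_mul_of_nonneg_left _ hc2
            have : (0:ℝ) ≤ (M:ℝ)⁻¹ := by positivity
            linarith
        _ = c2 / K := by rw [div_eq_mul_inv]
    linarith
  exact ⟨summable_of_sum_range_le h0 key, Real.tsum_le_of_sum_range_le h0 key⟩


lemma g_nonneg (t x : ℝ) : 0 ≤ g t x :=
  mul_nonneg (Real.exp_pos _).le (by linarith [Real.cos_le_one x])

lemma abs_int_g_cos_le (t : ℝ) (k : ℤ) :
    |∫ ω in (0:ℝ)..π, g t ω * Real.cos ((k:ℝ) * ω)| ≤ ∫ ω in (0:ℝ)..π, g t ω := by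
  have hpi := Real.pi_pos
  have hcont : Continuous fun ω : ℝ => g t ω * Real.cos ((k:ℝ) * ω) :=
    (continuous_g t).mul (Real.continuous_cos.comp (continuous_const.mul continuous_id))
  calc |∫ ω in (0:ℝ)..π, g t ω * Real.cos ((k:ℝ) * ω)|
      ≤ ∫ ω in (0:ℝ)..π, |g t ω * Real.cos ((k:ℝ) * ω)| :=
        intervalIntegral.abs_integral_le_integral_abs hpi.le
    _ ≤ ∫ ω in (0:ℝ)..π, g t ω := by
        apply intervalIntegral.integral_mono_on hpi.le
          (hcont.abs.intervalIntegrable _ _)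
          ((continuous_g t).intervalIntegrable _ _)
        intro x hx
        rw [abs_mul, abs_of_nonneg (g_nonneg t x)]
        exact mul_le_of_le_one_right (g_nonneg t x) (Real.abs_cos_le_one _)

lemma abs_int_g2_cos_le (t : ℝ) (k : ℤ) :
    |∫ ω in (0:ℝ)..π, g2 t ω * Real.cos ((k:ℝ) * ω)| ≤ ∫ ω in (0:ℝ)..π, |g2 t ω| := by
  have hpi := Real.pi_pos
  have hcont : Continuous fun ω : ℝ => g2 t ω * Real.cos ((k:ℝ) * ω) :=
    (continuous_g2 t).mul (Real.continuous_cos.comp (continuous_const.mul continuous_id))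
  calc |∫ ω in (0:ℝ)..π, g2 t ω * Real.cos ((k:ℝ) * ω)|
      ≤ ∫ ω in (0:ℝ)..π, |g2 t ω * Real.cos ((k:ℝ) * ω)| :=
        intervalIntegral.abs_integral_le_integral_abs hpi.le
    _ ≤ ∫ ω in (0:ℝ)..π, |g2 t ω| := by
        apply intervalIntegral.integral_mono_on hpi.le
          (hcont.abs.intervalIntegrable _ _)
          ((continuous_g2 t).abs.intervalIntegrable _ _)
        intro x hx
        rw [abs_mul]
        exact mul_le_of_le_one_right (abs_nonneg _) (Real.abs_cos_le_one _)

lemma Fbound1 (t : ℝ) (k : ℤ) :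
    |besselI (k + 1) t - 2 * besselI k t + besselI (k - 1) t|
      ≤ 2 / π * ∫ ω in (0:ℝ)..π, g t ω := by
  have hpi := Real.pi_pos
  rw [diff_eq t k, abs_mul, abs_neg, abs_of_pos (by positivity : (0:ℝ) < 2 / π)]
  exact mul_le_mul_of_nonneg_left (abs_int_g_cos_le t k) (by positivity)

lemma Fbound2 (t : ℝ) (k : ℤ) (hk : k ≠ 0) :
    |besselI (k + 1) t - 2 * besselI k t + besselI (k - 1) t|
      ≤ (2 / π * ∫ ω in (0:ℝ)..π, |g2 t ω|) / (k:ℝ) ^ 2 := by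
  have hpi := Real.pi_pos
  have hkr : (k:ℝ) ≠ 0 := Int.cast_ne_zero.mpr hk
  have hk2 : (0:ℝ) < (k:ℝ) ^ 2 := by positivity
  rw [diff_eq t k, ibp t k hk, abs_mul, abs_neg, abs_of_pos (by positivity : (0:ℝ) < 2 / π),
    abs_mul, abs_neg, abs_of_pos (by positivity : (0:ℝ) < 1 / (k:ℝ) ^ 2)]
  calc 2 / π * (1 / (k:ℝ) ^ 2 * |∫ ω in (0:ℝ)..π, g2 t ω * Real.cos ((k:ℝ) * ω)|)
      ≤ 2 / π * (1 / (k:ℝ) ^ 2 * ∫ ω in (0:ℝ)..π, |g2 t ω|) :=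
        mul_le_mul_of_nonneg_left
          (mul_le_mul_of_nonneg_left (abs_int_g2_cos_le t k) (by positivity)) (by positivity)
    _ = (2 / π * ∫ ω in (0:ℝ)..π, |g2 t ω|) / (k:ℝ) ^ 2 := by field_simp

end BesselAux

open BesselAux Real MeasureTheory

set_option maxHeartbeats 1000000 in
theorem besselI_second_difference_series :
    ∃ C : ℝ, 0 < C ∧ ∀ t : ℝ, 0 < t →
      Summable (fun k : ℤ => |besselI (k + 1) t - 2 * besselI k t + besselI (k - 1) t|) ∧
      (∑' k : ℤ, |besselI (k + 1) t - 2 * besselI k t + besselI (k - 1) t|) ≤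
        C * Real.exp t / t := by
  refine ⟨300, by norm_num, fun t ht => ?_⟩
  have hpi := Real.pi_pos
  set F : ℤ → ℝ := fun k => |besselI (k + 1) t - 2 * besselI k t + besselI (k - 1) t| with hF
  set E := Real.exp t with hE_def
  have hE : 0 < E := Real.exp_pos t
  set G := ∫ ω in (0:ℝ)..π, Real.exp (-(t / π ^ 2 * ω ^ 2)) with hG_def
  have hG0 : 0 ≤ G := by
    apply intervalIntegral.integral_nonneg hpi.le
    intro x _; exact (Real.exp_pos _).le
  have hst : 0 < Real.sqrt t := Real.sqrt_pos.mpr ht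
  have hG3 : G * Real.sqrt t ≤ 3 := by
    have h := gauss_main ht
    rw [← le_div_iff₀ hst] at *
    exact h
  have hG4 : G ≤ 4 := le_trans (gauss_pi ht) (by nlinarith [Real.pi_lt_d2])
  set Jt := ∫ ω in (0:ℝ)..π, g t ω with hJt_def
  set J2 := ∫ ω in (0:ℝ)..π, |g2 t ω| with hJ2_def
  have hJt0 : 0 ≤ Jt := by
    apply intervalIntegral.integral_nonneg hpi.le
    intro x hx
    exact g_nonneg t x
  have hJ20 : 0 ≤ J2 := by
    apply intervalIntegral.integral_nonneg hpi.le
    intro x _; exact abs_nonneg _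
  have hJt : Jt ≤ E / t * G := by
    calc Jt ≤ ∫ ω in (0:ℝ)..π, E / t * Real.exp (-(t / π ^ 2 * ω ^ 2)) := by
          apply intervalIntegral.integral_mono_on hpi.le
            ((continuous_g t).intervalIntegrable _ _)
            (Continuous.intervalIntegrable (by continuity) _ _)
          intro x hx
          exact g_le ht hx
      _ = E / t * G := intervalIntegral.integral_const_mul _ _
  have hJ2b : J2 ≤ 38 * E * G := by
    calc J2 ≤ ∫ ω in (0:ℝ)..π, 38 * E * Real.exp (-(t / π ^ 2 * ω ^ 2)) := by
          apply intervalIntegral.integral_mono_on hpi.le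
            ((continuous_g2 t).abs.intervalIntegrable _ _)
            (Continuous.intervalIntegrable (by continuity) _ _)
          intro x hx
          exact g2_le ht hx
      _ = 38 * E * G := intervalIntegral.integral_const_mul _ _
  set c1 := 2 / π * Jt with hc1_def
  set c2 := 2 / π * J2 with hc2_def
  have hc10 : 0 ≤ c1 := by positivity
  have hc20 : 0 ≤ c2 := by positivity
  -- uniform bound
  have hb1 : ∀ k : ℤ, F k ≤ c1 := fun k => Fbound1 t k
  have hb2 : ∀ k : ℤ, k ≠ 0 → F k ≤ c2 / (k:ℝ) ^ 2 := fun k hk => Fbound2 t k hk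
  -- choose K
  set K := ⌈Real.sqrt t⌉₊ with hK_def
  have hK0 : K ≠ 0 := by
    have := Nat.one_le_ceil_iff.mpr hst
    omega
  have hk1 : (1:ℝ) ≤ (K:ℝ) := by exact_mod_cast Nat.one_le_ceil_iff.mpr hst
  have hks : Real.sqrt t ≤ (K:ℝ) := Nat.le_ceil _
  have hk2 : (K:ℝ) ≤ Real.sqrt t + 1 := (Nat.ceil_lt_add_one (Real.sqrt_nonneg t)).le
  -- positive side
  obtain ⟨hsumP, htsumP⟩ := nat_tsum_bound (f := fun n : ℕ => F (n:ℤ)) hc20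
    (fun n => abs_nonneg _) (fun n => hb1 n)
    (fun n hn => by
      have h := hb2 (n:ℤ) (by exact_mod_cast hn)
      simpa using h) hK0
  -- negative side
  obtain ⟨hsumN, htsumN⟩ := nat_tsum_bound (f := fun n : ℕ => F (-((n:ℤ) + 1))) hc20
    (fun n => abs_nonneg _) (fun n => hb1 _)
    (fun n hn => by
      have h := hb2 (-((n:ℤ) + 1)) (by omega)
      have hcast : ((-((n:ℤ) + 1) : ℤ) : ℝ) ^ 2 = ((n:ℝ) + 1) ^ 2 := by push_cast; ring
      rw [hcast] at h
      refine le_trans h ?_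
      have hn1 : (1:ℝ) ≤ (n:ℝ) := by exact_mod_cast Nat.one_le_iff_ne_zero.mpr hn
      apply div_le_div_of_nonneg_left hc20 (by positivity) ?_ |>.trans_eq rfl
      nlinarith) hK0
  have htot : HasSum F ((∑' n : ℕ, F (n:ℤ)) + ∑' n : ℕ, F (-((n:ℤ) + 1))) :=
    HasSum.of_nat_of_neg_add_one hsumP.hasSum hsumN.hasSum
  refine ⟨htot.summable, ?_⟩
  rw [htot.tsum_eq]
  -- final arithmetic
  have hq0 : 0 ≤ c2 / (K:ℝ) := by positivity
  have hKne : (K:ℝ) ≠ 0 := by positivity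
  have hss : Real.sqrt t * Real.sqrt t = t := Real.mul_self_sqrt ht.le
  have hc1t : c1 * t ≤ E * G := by
    have h1 : Jt * t ≤ E * G := by
      have := mul_le_mul_of_nonneg_right hJt ht.le
      calc Jt * t ≤ E / t * G * t := this
        _ = E * G := by field_simp
    calc c1 * t = 2 / π * (Jt * t) := by rw [hc1_def]; ring
      _ ≤ 2 / π * (E * G) := mul_le_mul_of_nonneg_left h1 (by positivity)
      _ ≤ 1 * (E * G) := by
          apply mul_le_mul_of_nonneg_right _ (by positivity)
          rw [div_le_one hpi]
          nlinarith [Real.pi_gt_three]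
      _ = E * G := by ring
  have hc2b : c2 ≤ 26 * E * G := by
    calc c2 = 2 / π * J2 := hc2_def
      _ ≤ 2 / π * (38 * E * G) := mul_le_mul_of_nonneg_left hJ2b (by positivity)
      _ ≤ 26 * E * G := by
          have h3 : (3:ℝ) < π := Real.pi_gt_three
          rw [div_mul_eq_mul_div, div_le_iff₀ hpi]
          nlinarith [mul_nonneg hE.le hG0]
  have h1 : ((K:ℝ) + 1) * c1 * t ≤ 11 * E := by
    calc ((K:ℝ) + 1) * c1 * t = ((K:ℝ) + 1) * (c1 * t) := by ring
      _ ≤ (Real.sqrt t + 2) * (c1 * t) :=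
          mul_le_mul_of_nonneg_right (by linarith) (mul_nonneg hc10 ht.le)
      _ ≤ (Real.sqrt t + 2) * (E * G) :=
          mul_le_mul_of_nonneg_left hc1t (by positivity)
      _ = E * (G * Real.sqrt t) + 2 * (E * G) := by ring
      _ ≤ E * 3 + 2 * (E * 4) := by
          refine add_le_add (mul_le_mul_of_nonneg_left hG3 hE.le) ?_
          have := mul_le_mul_of_nonneg_left hG4 hE.le
          nlinarith
      _ = 11 * E := by ring
  have h2 : c2 / (K:ℝ) * t ≤ 78 * E := by
    have hqs : c2 / (K:ℝ) * Real.sqrt t ≤ c2 := by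
      calc c2 / (K:ℝ) * Real.sqrt t ≤ c2 / (K:ℝ) * (K:ℝ) :=
            mul_le_mul_of_nonneg_left hks hq0
        _ = c2 := div_mul_cancel₀ _ hKne
    calc c2 / (K:ℝ) * t = (c2 / (K:ℝ) * Real.sqrt t) * Real.sqrt t := by
          rw [mul_assoc, hss]
      _ ≤ c2 * Real.sqrt t := mul_le_mul_of_nonneg_right hqs (Real.sqrt_nonneg t)
      _ ≤ 26 * E * G * Real.sqrt t := mul_le_mul_of_nonneg_right hc2b (Real.sqrt_nonneg t)
      _ = 26 * E * (G * Real.sqrt t) := by ring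
      _ ≤ 26 * E * 3 := mul_le_mul_of_nonneg_left hG3 (by positivity)
      _ = 78 * E := by ring
  have hsum_le : (∑' n : ℕ, F (n:ℤ)) + (∑' n : ℕ, F (-((n:ℤ) + 1)))
      ≤ 2 * (((K:ℝ) + 1) * c1 + c2 / (K:ℝ)) := by linarith
  calc (∑' n : ℕ, F (n:ℤ)) + (∑' n : ℕ, F (-((n:ℤ) + 1)))
      ≤ 2 * (((K:ℝ) + 1) * c1 + c2 / (K:ℝ)) := hsum_le
    _ ≤ 300 * E / t := by
        rw [le_div_iff₀ ht]
        calc 2 * (((K:ℝ) + 1) * c1 + c2 / (K:ℝ)) * t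
            = 2 * (((K:ℝ) + 1) * c1 * t) + 2 * (c2 / (K:ℝ) * t) := by ring
          _ ≤ 2 * (11 * E) + 2 * (78 * E) := by linarith
          _ ≤ 300 * E := by nlinarith
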